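/- The hyperelliptic-type curve y^2 = 1 - 3x^4 has exactly two rational points, namely (0, 1) and (0, -1). -/

import Mathlib

set_option maxHeartbeats 1000000

private lemma L1 : ∀ k q r : ZMod 16, r ^ 2 ≠ q ^ 4 - 3 * (2 * k + 1) ^ 4 := by decide

private lemma L2a : ∀ e f c : ZMod 16, c ^ 2 ≠ 3 * (2 * f + 1) ^ 4 - (2 * e + 1) ^ 4 := by decide
private lemma L2b : ∀ e f c : ZMod 16, c ^ 2 ≠ 3 * (2 * f) ^ 4 - (2 * e + 1) ^ 4 := by decide
private lemma L2c : ∀ e f c : ZMod 16, c ^ 2 ≠ 3 * (2 * f + 1) ^ 4 - (2 * e) ^ 4 := by decide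

private lemma L3 : ∀ a k q : ZMod 16, q ^ 2 ≠ 4 * a ^ 4 + 3 * (2 * k + 1) ^ 4 := by decide

private lemma pow4_split {m n s : ℤ} (hm : 0 < m) (hn : 0 < n) (h : IsCoprime m n)
    (he : m * n = s ^ 4) : ∃ a b : ℤ, 0 < a ∧ 0 < b ∧ m = a ^ 4 ∧ n = b ^ 4 := by
  obtain ⟨e, he1⟩ := Int.sq_of_isCoprime h (show m * n = (s ^ 2) ^ 2 by linear_combination he)
  have hme : m = e ^ 2 := by
    rcases he1 with h1 | h1
    · exact h1
    · nlinarith [sq_nonneg e]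
  obtain ⟨f, hf1⟩ := Int.sq_of_isCoprime h.symm
    (show n * m = (s ^ 2) ^ 2 by linear_combination he)
  have hnf : n = f ^ 2 := by
    rcases hf1 with h1 | h1
    · exact h1
    · nlinarith [sq_nonneg f]
  have hma : m = |e| ^ 2 := by rw [sq_abs]; exact hme
  have hnb : n = |f| ^ 2 := by rw [sq_abs]; exact hnf
  have hea : 0 < |e| := by nlinarith [abs_nonneg e]
  have hfb : 0 < |f| := by nlinarith [abs_nonneg f]
  have hco2 : IsCoprime |e| |f| := by
    rw [hma, hnb] at h
    exact (IsCoprime.pow_left_iff two_pos).mp ((IsCoprime.pow_right_iff two_pos).mp h)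
  have hab : |e| * |f| = s ^ 2 := by
    have h2 : (|e| * |f|) ^ 2 = (s ^ 2) ^ 2 := by rw [mul_pow, ← hma, ← hnb, he]; ring
    rcases mul_eq_zero.mp (show (|e| * |f| - s ^ 2) * (|e| * |f| + s ^ 2) = 0 by
      linear_combination h2) with h3 | h3
    · linarith
    · nlinarith [sq_nonneg s, mul_pos hea hfb]
  obtain ⟨g, hg⟩ := Int.sq_of_isCoprime hco2 hab
  have hgeq : |e| = g ^ 2 := by
    rcases hg with h1 | h1
    · exact h1
    · nlinarith [sq_nonneg g]
  obtain ⟨k, hk⟩ := Int.sq_of_isCoprime hco2.symm (by rw [mul_comm]; exact hab)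
  have hkeq : |f| = k ^ 2 := by
    rcases hk with h1 | h1
    · exact h1
    · nlinarith [sq_nonneg k]
  have hg0 : g ≠ 0 := by
    rintro rfl
    rw [hgeq] at hea; norm_num at hea
  have hk0 : k ≠ 0 := by
    rintro rfl
    rw [hkeq] at hfb; norm_num at hfb
  refine ⟨|g|, |k|, abs_pos.mpr hg0, abs_pos.mpr hk0, ?_, ?_⟩
  · have h4 : |g| ^ 4 = g ^ 4 := by
      rw [← abs_pow, abs_of_nonneg (by positivity)]
    rw [h4, hma, hgeq]; ring
  · have h4 : |k| ^ 4 = k ^ 4 := by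
      rw [← abs_pow, abs_of_nonneg (by positivity)]
    rw [h4, hnb, hkeq]; ring

private lemma stageA_core {u v s q : ℤ} (hu : 0 < u) (hv : 0 < v) (hco : IsCoprime u v)
    (hprod : u * v = 12 * s ^ 4) (hsum : u + v = q ^ 2) (hqodd : Odd q) (hue : Even u) :
    ∃ c d : ℤ, Odd c ∧ 0 < d ∧ IsCoprime c d ∧ c ^ 4 + 12 * d ^ 4 = q ^ 2 := by
  have hvodd : Odd v := by
    rcases Int.even_or_odd v with h | h
    · exfalso
      have h2 : Even (u + v) := hue.add h
      rw [hsum] at h2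
      exact (Int.not_odd_iff_even.mpr h2) hqodd.pow
    · exact h
  have h2v : ¬ (2:ℤ) ∣ v := by
    intro hd
    obtain ⟨t, ht⟩ := hd
    exact (Int.not_odd_iff_even.mpr ⟨t, by omega⟩) hvodd
  have hc4v : IsCoprime (4:ℤ) v := by
    have h2 : IsCoprime (2:ℤ) v := (Int.prime_two.coprime_iff_not_dvd).mpr h2v
    have h3 : IsCoprime ((2:ℤ) ^ 2) v := h2.pow_left
    norm_num at h3
    exact h3
  have h4u : (4:ℤ) ∣ u :=
    hc4v.dvd_of_dvd_mul_right ⟨3 * s ^ 4, by rw [hprod]; ring⟩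
  have h3uv : (3:ℤ) ∣ u * v := ⟨4 * s ^ 4, by rw [hprod]; ring⟩
  rcases Int.prime_three.dvd_mul.mp h3uv with h3u | h3v
  · -- 3 ∣ u : u = 12 a⁴, v = b⁴
    have hc43 : IsCoprime (4:ℤ) (3:ℤ) := by
      rw [Int.isCoprime_iff_gcd_eq_one]; decide
    have h12 : (12:ℤ) ∣ u := by
      have h := hc43.mul_dvd h4u h3u
      norm_num at h
      exact h
    obtain ⟨u', hu'⟩ := h12
    have hu'v : u' * v = s ^ 4 := by
      have h12' : (12:ℤ) * (u' * v) = 12 * s ^ 4 := by rw [← hprod, hu']; ring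
      exact mul_left_cancel₀ (by norm_num) h12'
    have hcou' : IsCoprime u' v := hco.of_isCoprime_of_dvd_left ⟨12, by rw [hu']; ring⟩
    have hu'pos : 0 < u' := by linarith [hu', hu]
    obtain ⟨a, b, hapos, hbpos, ha, hb⟩ := pow4_split hu'pos hv hcou' hu'v
    refine ⟨b, a, ?_, hapos, ?_, ?_⟩
    · have hob : Odd (b ^ 4) := by rw [← hb]; exact hvodd
      rcases Int.odd_pow.mp hob with h | h
      · exact h
      · norm_num at h
    · have hc : IsCoprime (a ^ 4) (b ^ 4) := by rw [← ha, ← hb]; exact hcou'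
      exact (((IsCoprime.pow_left_iff (by norm_num)).mp
        ((IsCoprime.pow_right_iff (by norm_num)).mp hc))).symm
    · linarith [hsum, hu', ha, hb]
  · -- 3 ∣ v : u = 4 a⁴, v = 3 b⁴ : contradiction mod 16
    exfalso
    obtain ⟨v', hv'⟩ := h3v
    obtain ⟨u'', hu''⟩ := h4u
    have huv2 : u'' * v' = s ^ 4 := by
      have h12' : (12:ℤ) * (u'' * v') = 12 * s ^ 4 := by rw [← hprod, hu'', hv']; ring
      exact mul_left_cancel₀ (by norm_num) h12'
    have hcou2 : IsCoprime u'' v' :=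
      (hco.of_isCoprime_of_dvd_left ⟨4, by rw [hu'']; ring⟩).of_isCoprime_of_dvd_right
        ⟨3, by rw [hv']; ring⟩
    have hu2pos : 0 < u'' := by linarith [hu'', hu]
    have hv2pos : 0 < v' := by linarith [hv', hv]
    obtain ⟨a, b, hapos, hbpos, ha, hb⟩ := pow4_split hu2pos hv2pos hcou2 huv2
    have hv'odd : Odd v' := by
      rcases Int.even_or_odd v' with h | h
      · exfalso
        obtain ⟨t, ht⟩ := h
        exact (Int.not_odd_iff_even.mpr ⟨3 * t, by omega⟩) hvodd
      · exact h
    have hbodd : Odd b := by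
      have hob : Odd (b ^ 4) := by rw [← hb]; exact hv'odd
      rcases Int.odd_pow.mp hob with h | h
      · exact h
      · norm_num at h
    obtain ⟨k, hk⟩ := hbodd
    have key : q ^ 2 = 4 * a ^ 4 + 3 * (2 * k + 1) ^ 4 := by
      rw [← hk]
      linarith [hsum, hu'', hv', ha, hb]
    have h16 := congrArg (fun z : ℤ => (z : ZMod 16)) key
    push_cast at h16
    exact L3 _ _ _ h16

private lemma stageA {u v s q : ℤ} (hu : 0 < u) (hv : 0 < v) (hco : IsCoprime u v)
    (hprod : u * v = 12 * s ^ 4) (hsum : u + v = q ^ 2) (hqodd : Odd q) :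
    ∃ c d : ℤ, Odd c ∧ 0 < d ∧ IsCoprime c d ∧ c ^ 4 + 12 * d ^ 4 = q ^ 2 := by
  rcases Int.even_or_odd u with h | h
  · exact stageA_core hu hv hco hprod hsum hqodd h
  · rcases Int.even_or_odd v with h2 | h2
    · exact stageA_core hv hu hco.symm (by rw [mul_comm]; exact hprod)
        (by rw [add_comm]; exact hsum) hqodd h2
    · exfalso
      have h3 : Even (u + v) := h.add_odd h2
      rw [hsum] at h3
      exact (Int.not_odd_iff_even.mpr h3) hqodd.pow

private lemma descent : ∀ q : ℕ, ∀ p r : ℤ, Int.gcd p (q : ℤ) = 1 →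
    r ^ 2 = (q : ℤ) ^ 4 - 3 * p ^ 4 → p = 0 := by
  intro q
  induction q using Nat.strong_induction_on with
  | _ q IH =>
  intro p r hgcd heq
  by_contra hp
  have hp2 : 1 ≤ p ^ 2 := by
    rcases (show p ≤ -1 ∨ 1 ≤ p by omega) with h | h <;> nlinarith
  have hp4 : 1 ≤ p ^ 4 := by nlinarith [hp2, sq_nonneg (p ^ 2 - 1)]
  rcases Nat.lt_or_ge q 2 with hq | hq
  · interval_cases q
    · norm_num at heq; nlinarith [sq_nonneg r]
    · norm_num at heq; nlinarith [sq_nonneg r]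
  set qz : ℤ := (q : ℤ) with hqzdef
  have hqz2 : 2 ≤ qz := by rw [hqzdef]; exact_mod_cast hq
  have hco : IsCoprime p qz := Int.isCoprime_iff_gcd_eq_one.mpr hgcd
  have h3q : ¬ (3:ℤ) ∣ qz := by
    intro h3
    obtain ⟨w, hw⟩ := h3
    have h3r : (3:ℤ) ∣ r := by
      refine Int.prime_three.dvd_of_dvd_pow (n := 2) ⟨27 * w ^ 4 - p ^ 4, ?_⟩
      rw [heq, hw]; ring
    obtain ⟨t, ht⟩ := h3r
    have h3p : (3:ℤ) ∣ p := by
      refine Int.prime_three.dvd_of_dvd_pow (n := 4) ⟨9 * w ^ 4 - t ^ 2, ?_⟩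
      rw [ht, hw] at heq
      nlinarith [heq]
    exact absurd (hco.isUnit_of_dvd' h3p ⟨w, hw⟩) (by rw [Int.isUnit_iff]; norm_num)
  have hpeven : Even p := by
    rcases Int.even_or_odd p with h | h
    · exact h
    · exfalso
      obtain ⟨k, hk⟩ := h
      rw [hk] at heq
      have h16 := congrArg (fun z : ℤ => (z : ZMod 16)) heq
      push_cast at h16
      exact L1 _ _ _ h16
  obtain ⟨s, hs⟩ := hpeven
  have hs' : p = 2 * s := by omega
  have hsne : s ≠ 0 := by omega
  have h2q : ¬ (2:ℤ) ∣ qz := fun h2 =>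
    absurd (hco.isUnit_of_dvd' ⟨s, hs'⟩ h2) (by rw [Int.isUnit_iff]; norm_num)
  have hqodd : Odd qz := Int.odd_iff.mpr (by omega)
  have hrodd : Odd r := by
    have h1 : Odd (r ^ 2) := by
      rw [heq]
      exact (hqodd.pow).sub_even ⟨24 * s ^ 4, by rw [hs']; ring⟩
    rcases Int.odd_pow.mp h1 with h | h
    · exact h
    · norm_num at h
  set r1 := |r| with hr1def
  have hr1sq : r1 ^ 2 = qz ^ 4 - 3 * p ^ 4 := by rw [hr1def, sq_abs]; exact heq
  have hr1odd : Odd r1 := by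
    rcases abs_choice r with h | h
    · rw [hr1def, h]; exact hrodd
    · rw [hr1def, h]; exact hrodd.neg
  have hr1nonneg : 0 ≤ r1 := abs_nonneg r
  have hr1lt : r1 < qz ^ 2 := by
    by_contra hcon
    push_neg at hcon
    have h1 : (qz ^ 2) ^ 2 ≤ r1 ^ 2 := pow_le_pow_left₀ (by positivity) hcon 2
    have h2 : (qz ^ 2) ^ 2 = qz ^ 4 := by ring
    rw [h2] at h1
    linarith [hr1sq, hp4]
  have hq2odd : Odd (qz ^ 2) := hqodd.pow
  obtain ⟨u, hu⟩ := hq2odd.sub_odd hr1odd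
  obtain ⟨v, hv⟩ := hq2odd.add_odd hr1odd
  have hupos : 0 < u := by linarith
  have hvpos : 0 < v := by
    have h1 : (2:ℤ) ^ 2 ≤ qz ^ 2 := pow_le_pow_left₀ (by norm_num) hqz2 2
    norm_num at h1
    linarith [hv, hr1nonneg]
  have hsum : u + v = qz ^ 2 := by linarith
  have hdiff : v - u = r1 := by linarith
  have hprod : u * v = 12 * s ^ 4 :=
    mul_left_cancel₀ (show (4:ℤ) ≠ 0 by norm_num) (by
      linear_combination (-(qz ^ 2 + r1)) * hu + (-(u + u)) * hv - hr1sq +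
        3 * (p + 2 * s) * (p ^ 2 + 4 * s ^ 2) * hs')
  have hcouv : IsCoprime u v := by
    rw [Int.isCoprime_iff_gcd_eq_one]
    by_contra hg
    obtain ⟨ℓ, hℓp, hℓd⟩ := Nat.exists_prime_and_dvd hg
    have hLu : (ℓ:ℤ) ∣ u := (Int.natCast_dvd_natCast.mpr hℓd).trans (Int.gcd_dvd_left u v)
    have hLv : (ℓ:ℤ) ∣ v := (Int.natCast_dvd_natCast.mpr hℓd).trans (Int.gcd_dvd_right u v)
    have hLprime : Prime (ℓ:ℤ) := Nat.prime_iff_prime_int.mp hℓp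
    have hLq : (ℓ:ℤ) ∣ qz := hLprime.dvd_of_dvd_pow
      (show (ℓ:ℤ) ∣ qz ^ 2 by rw [← hsum]; exact dvd_add hLu hLv)
    have hLuv : (ℓ:ℤ) ∣ 12 * s ^ 4 := by rw [← hprod]; exact hLu.mul_right v
    rcases hLprime.dvd_mul.mp hLuv with h12 | hs4
    · have h12' : ℓ ∣ 12 := by exact_mod_cast h12
      have hle : ℓ ≤ 12 := Nat.le_of_dvd (by norm_num) h12'
      have h23 : ℓ = 2 ∨ ℓ = 3 := by
        interval_cases ℓ <;> revert h12' hℓp <;> decide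
      rcases h23 with rfl | rfl
      · exact h2q (by exact_mod_cast hLq)
      · exact h3q (by exact_mod_cast hLq)
    · have hLs : (ℓ:ℤ) ∣ s := hLprime.dvd_of_dvd_pow hs4
      have hLp : (ℓ:ℤ) ∣ p := by rw [hs']; exact hLs.mul_left 2
      exact hLprime.not_unit (hco.isUnit_of_dvd' hLp hLq)
  obtain ⟨c, d, hcodd, hdpos, hcdco, hkey⟩ := stageA hupos hvpos hcouv hprod hsum hqodd
  have hd2 : 1 ≤ d ^ 2 := by nlinarith [hdpos]
  have hd4 : 1 ≤ d ^ 4 := by nlinarith [hd2, sq_nonneg (d ^ 2 - 1)]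
  have hc2lt : c ^ 2 < qz := by
    by_contra hcon
    push_neg at hcon
    have h1 : qz ^ 2 ≤ (c ^ 2) ^ 2 := pow_le_pow_left₀ (by linarith) hcon 2
    have h2 : (c ^ 2) ^ 2 = c ^ 4 := by ring
    rw [h2] at h1
    linarith [hkey, hd4]
  have hc2odd : Odd (c ^ 2) := hcodd.pow
  obtain ⟨m, hm⟩ := hqodd.sub_odd hc2odd
  obtain ⟨n, hn⟩ := hqodd.add_odd hc2odd
  have hmpos : 0 < m := by linarith
  have hnpos : 0 < n := by linarith [sq_nonneg c]
  have hmn_sum : m + n = qz := by linarith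
  have hmn_diff : n - m = c ^ 2 := by linarith
  have hmnprod : m * n = 3 * d ^ 4 :=
    mul_left_cancel₀ (show (4:ℤ) ≠ 0 by norm_num) (by
      linear_combination (-(qz + c ^ 2)) * hm + (-(m + m)) * hn - hkey)
  have hcomn : IsCoprime m n := by
    rw [Int.isCoprime_iff_gcd_eq_one]
    by_contra hg
    obtain ⟨ℓ, hℓp, hℓd⟩ := Nat.exists_prime_and_dvd hg
    have hLm : (ℓ:ℤ) ∣ m := (Int.natCast_dvd_natCast.mpr hℓd).trans (Int.gcd_dvd_left m n)
    have hLn : (ℓ:ℤ) ∣ n := (Int.natCast_dvd_natCast.mpr hℓd).trans (Int.gcd_dvd_right m n)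
    have hLprime : Prime (ℓ:ℤ) := Nat.prime_iff_prime_int.mp hℓp
    have hLq : (ℓ:ℤ) ∣ qz := by rw [← hmn_sum]; exact dvd_add hLm hLn
    have hLc : (ℓ:ℤ) ∣ c := hLprime.dvd_of_dvd_pow
      (show (ℓ:ℤ) ∣ c ^ 2 by rw [← hmn_diff]; exact dvd_sub hLn hLm)
    have hL3d : (ℓ:ℤ) ∣ 3 * d ^ 4 := by rw [← hmnprod]; exact hLm.mul_right n
    rcases hLprime.dvd_mul.mp hL3d with h3 | hd4'
    · have h3' : ℓ ∣ 3 := by exact_mod_cast h3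
      have : ℓ = 3 := (Nat.prime_dvd_prime_iff_eq hℓp (by norm_num)).mp h3'
      subst this
      exact h3q (by exact_mod_cast hLq)
    · exact hLprime.not_unit (hcdco.isUnit_of_dvd' hLc (hLprime.dvd_of_dvd_pow hd4'))
  have h3mn : (3:ℤ) ∣ m * n := ⟨d ^ 4, hmnprod⟩
  rcases Int.prime_three.dvd_mul.mp h3mn with h3m | h3n
  · -- 3 ∣ m : descent case
    obtain ⟨m1, hm1⟩ := h3m
    have hm1n : m1 * n = d ^ 4 := mul_left_cancel₀ (show (3:ℤ) ≠ 0 by norm_num)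
      (show (3:ℤ) * (m1 * n) = 3 * d ^ 4 by rw [← hmnprod, hm1]; ring)
    have hm1pos : 0 < m1 := by linarith only [hm1, hmpos]
    have hcom1 : IsCoprime m1 n := hcomn.of_isCoprime_of_dvd_left ⟨3, by rw [hm1]; ring⟩
    obtain ⟨e, f, hepos, hfpos, he, hf⟩ := pow4_split hm1pos hnpos hcom1 hm1n
    have hnew : c ^ 2 = f ^ 4 - 3 * e ^ 4 := by linarith only [hmn_diff, hm1, he, hf]
    have hflt : f ^ 4 < qz := by linarith only [hf, hn, hc2lt]
    have hfle : f ≤ f ^ 4 := le_self_pow₀ (by linarith only [hfpos]) (by norm_num)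
    have hfabs : (f.natAbs : ℤ) = f := Int.natAbs_of_nonneg (le_of_lt hfpos)
    have hfnat : f.natAbs < q := by
      have hlt : (f.natAbs : ℤ) < (q : ℤ) := by rw [hfabs]; exact lt_of_le_of_lt hfle hflt
      exact_mod_cast hlt
    have hcoef : IsCoprime e f := by
      have hc : IsCoprime (e ^ 4) (f ^ 4) := by rw [← he, ← hf]; exact hcom1
      exact (IsCoprime.pow_left_iff (by norm_num)).mp
        ((IsCoprime.pow_right_iff (by norm_num)).mp hc)
    have hgcd2 : Int.gcd e ((f.natAbs : ℕ) : ℤ) = 1 := by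
      rw [hfabs]
      exact Int.isCoprime_iff_gcd_eq_one.mp hcoef
    have heq2 : c ^ 2 = ((f.natAbs : ℕ) : ℤ) ^ 4 - 3 * e ^ 4 := by rw [hfabs]; exact hnew
    have he0 := IH f.natAbs hfnat e c hgcd2 heq2
    rw [he0] at he
    norm_num at he
    linarith only [he, hm1pos]
  · -- 3 ∣ n : contradiction mod 16
    obtain ⟨n1, hn1⟩ := h3n
    have hmn1 : m * n1 = d ^ 4 := mul_left_cancel₀ (show (3:ℤ) ≠ 0 by norm_num)
      (show (3:ℤ) * (m * n1) = 3 * d ^ 4 by rw [← hmnprod, hn1]; ring)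
    have hn1pos : 0 < n1 := by linarith only [hn1, hnpos]
    have hcomn1 : IsCoprime m n1 := hcomn.of_isCoprime_of_dvd_right ⟨3, by rw [hn1]; ring⟩
    obtain ⟨e, f, hepos, hfpos, he, hf⟩ := pow4_split hmpos hn1pos hcomn1 hmn1
    have hnew : c ^ 2 = 3 * f ^ 4 - e ^ 4 := by linarith only [hmn_diff, hn1, he, hf]
    have hcoef : IsCoprime e f := by
      have hc : IsCoprime (e ^ 4) (f ^ 4) := by rw [← he, ← hf]; exact hcomn1
      exact (IsCoprime.pow_left_iff (by norm_num)).mp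
        ((IsCoprime.pow_right_iff (by norm_num)).mp hc)
    rcases Int.even_or_odd e with he2 | he2 <;> rcases Int.even_or_odd f with hf2 | hf2
    · obtain ⟨e1, he1⟩ := he2
      obtain ⟨f1, hf1'⟩ := hf2
      exact absurd (hcoef.isUnit_of_dvd' (show (2:ℤ) ∣ e from ⟨e1, by omega⟩)
        (show (2:ℤ) ∣ f from ⟨f1, by omega⟩)) (by rw [Int.isUnit_iff]; norm_num)
    · obtain ⟨e1, he1⟩ := he2
      obtain ⟨f1, hf1'⟩ := hf2
      rw [show e = 2 * e1 by omega, hf1'] at hnew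
      have h16 := congrArg (fun z : ℤ => (z : ZMod 16)) hnew
      push_cast at h16
      exact L2c _ _ _ h16
    · obtain ⟨e1, he1⟩ := he2
      obtain ⟨f1, hf1'⟩ := hf2
      rw [he1, show f = 2 * f1 by omega] at hnew
      have h16 := congrArg (fun z : ℤ => (z : ZMod 16)) hnew
      push_cast at h16
      exact L2b _ _ _ h16
    · obtain ⟨e1, he1⟩ := he2
      obtain ⟨f1, hf1'⟩ := hf2
      rw [he1, hf1'] at hnew
      have h16 := congrArg (fun z : ℤ => (z : ZMod 16)) hnew
      push_cast at h16
      exact L2a _ _ _ h16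

theorem stmt_17 :
    {p : ℚ × ℚ | p.2 ^ 2 = 1 - 3 * p.1 ^ 4} = {(0, 1), (0, -1)} := by
  ext ⟨x, y⟩
  simp only [Set.mem_setOf_eq, Set.mem_insert_iff, Set.mem_singleton_iff, Prod.mk.injEq]
  constructor
  · intro h
    have hx : x = 0 := by
      have hq0 : ((x.den : ℚ)) ≠ 0 := by
        exact_mod_cast x.den_nz
      set z : ℚ := y * (x.den : ℚ) ^ 2 with hzdef
      have hxq : (x.num : ℚ) = x * (x.den : ℚ) := by
        have h1 := Rat.num_div_den x
        rw [div_eq_iff hq0] at h1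
        exact h1
      have hzq : z ^ 2 = (x.den : ℚ) ^ 4 - 3 * (x.num : ℚ) ^ 4 := by
        have h1 : z ^ 2 = y ^ 2 * (x.den : ℚ) ^ 4 := by rw [hzdef]; ring
        rw [h1, h]
        have h2 : (x.num : ℚ) ^ 4 = x ^ 4 * (x.den : ℚ) ^ 4 := by rw [hxq]; ring
        rw [h2]; ring
      have hzz : z ^ 2 = (((x.den : ℤ) ^ 4 - 3 * x.num ^ 4 : ℤ) : ℚ) := by
        rw [hzq]; push_cast; ring
      have hzden : z.den = 1 := by
        have h1 : (z ^ 2).den = 1 := by rw [hzz]; exact Rat.den_intCast _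
        rw [Rat.den_pow] at h1
        exact (pow_eq_one_iff.mp h1).resolve_right (by norm_num)
      have hzint : (z.num : ℚ) = z := Rat.coe_int_num_of_den_eq_one hzden
      have hfinal : z.num ^ 2 = (x.den : ℤ) ^ 4 - 3 * x.num ^ 4 := by
        have h1 := hzz
        rw [← hzint] at h1
        exact_mod_cast h1
      have hgcd : Int.gcd x.num ((x.den : ℕ) : ℤ) = 1 := by
        simpa [Int.gcd] using x.reduced
      have hp0 : x.num = 0 := descent x.den x.num z.num hgcd hfinal
      exact Rat.num_eq_zero.mp hp0
    subst hx
    norm_num at h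
    rcases h with h | h
    · left; exact ⟨rfl, h⟩
    · right; exact ⟨rfl, h⟩
  · rintro (⟨h1, h2⟩ | ⟨h1, h2⟩) <;> subst h1 <;> subst h2 <;> norm_num
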